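/- arXiv:2011.12732 — 2 statements merged into one kernel-verified Lean document; each statement's English description precedes it below -/
import Mathlib

section
/- Let m, a, α > 0 be real constants with m ≠ a. Set r = |m−a|/(m+a), and for each integer n let n_a = n if m > a and n_a = n + 1/2 if 0 < m < a, and put μₙ = (1/2)·ln r + n_a π i. Then there exist a natural number N and a constant C > 0 such that for every integer n with |n| ≥ N there exists λₙ ∈ ℂ satisfying e^{2λₙ}(1 + α + (a+m)λₙ) + (1 − α) + (a − m)λₙ = 0 and |λₙ − μₙ| ≤ C/|n|. -/
open Complex

lemma log_lip (z w : ℂ) (hz : ‖z‖ ≤ 1/2) (hw : ‖w‖ ≤ 1/2) :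
    ‖Complex.log (1+z) - Complex.log (1+w)‖ ≤ 2 * ‖z - w‖ := by
  have hmem : ∀ u : ℂ, ‖u‖ ≤ 1/2 → 1 + u ∈ Metric.closedBall (1:ℂ) (1/2) := by
    intro u hu
    simpa [Metric.mem_closedBall, dist_eq_norm] using hu
  have hre : ∀ x : ℂ, x ∈ Metric.closedBall (1:ℂ) (1/2) → (1/2 : ℝ) ≤ x.re := by
    intro x hx
    have h1 : |(x - 1).re| ≤ ‖x - 1‖ := Complex.abs_re_le_norm _
    have h2 : ‖x - 1‖ ≤ 1/2 := by
      simpa [Metric.mem_closedBall, dist_eq_norm] using hx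
    have := (abs_le.1 (h1.trans h2)).1
    simp only [Complex.sub_re, Complex.one_re] at this
    linarith
  have key := Convex.norm_image_sub_le_of_norm_hasDerivWithin_le
    (f := Complex.log) (f' := fun x => x⁻¹) (s := Metric.closedBall (1:ℂ) (1/2)) (C := 2)
    (fun x hx => (Complex.hasDerivAt_log (by
      exact Complex.mem_slitPlane_iff.2 (Or.inl (lt_of_lt_of_le (by norm_num) (hre x hx))))).hasDerivWithinAt)
    (fun x hx => by
      have h1 : (1/2 : ℝ) ≤ ‖x‖ := le_trans (hre x hx) (Complex.re_le_norm x)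
      rw [norm_inv]
      rw [inv_le_comm₀ ?_ (by norm_num)]
      · linarith
      · linarith)
    (convex_closedBall _ _) (hmem w hw) (hmem z hz)
  calc ‖Complex.log (1+z) - Complex.log (1+w)‖ ≤ 2 * ‖(1+z) - (1+w)‖ := key
    _ = 2 * ‖z - w‖ := by ring_nf



/-- `n_a = n` if `m > a` and `n + 1/2` if `0 < m < a`. -/
noncomputable def na (m a : ℝ) (n : ℤ) : ℝ := if a < m then (n : ℝ) else (n : ℝ) + 1 / 2

/-- `μₙ = (1/2)·ln(|m-a|/(m+a)) + n_a π i`. -/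
noncomputable def muSeq (m a : ℝ) (n : ℤ) : ℂ :=
  (Real.log (|m - a| / (m + a)) / 2 : ℝ) + (na m a n * Real.pi : ℝ) * Complex.I

lemma exp_two_mu (m a : ℝ) (hm : 0 < m) (ha : 0 < a) (hma : m ≠ a) (n : ℤ) :
    Complex.exp (2 * muSeq m a n) = ((m - a) / (m + a) : ℝ) := by
  have hr : (0:ℝ) < |m - a| / (m + a) := by
    apply div_pos (abs_pos.2 (sub_ne_zero.2 hma)) (by linarith)
  have h1 : (2 : ℂ) * muSeq m a n =
      (Real.log (|m - a| / (m + a)) : ℝ) + (2 * na m a n * Real.pi : ℝ) * Complex.I := by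
    unfold muSeq; push_cast; ring
  rw [h1, Complex.exp_add, ← Complex.ofReal_exp, Real.exp_log hr]
  rcases lt_or_gt_of_ne hma with hlt | hgt
  · have hna : na m a n = (n : ℝ) + 1/2 := by unfold na; rw [if_neg (by linarith)]
    have habs : |m - a| = a - m := by rw [abs_of_neg (by linarith : m - a < 0)]; ring
    have hexp : Complex.exp ((2 * na m a n * Real.pi : ℝ) * Complex.I) = -1 := by
      rw [hna]
      have : ((2 * ((n:ℝ) + 1/2) * Real.pi : ℝ) : ℂ) * Complex.I
          = (n : ℂ) * (2 * Real.pi * Complex.I) + Real.pi * Complex.I := by push_cast; ring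
      rw [this, Complex.exp_add, Complex.exp_int_mul_two_pi_mul_I, Complex.exp_pi_mul_I, one_mul]
    rw [hexp, habs]
    push_cast
    have hden : (m:ℂ) + a ≠ 0 := by
      norm_cast; linarith
    field_simp
    ring
  · have hna : na m a n = (n : ℝ) := by unfold na; rw [if_pos (by linarith)]
    have habs : |m - a| = m - a := abs_of_pos (by linarith)
    have hexp : Complex.exp ((2 * na m a n * Real.pi : ℝ) * Complex.I) = 1 := by
      rw [hna]
      have : ((2 * (n:ℝ) * Real.pi : ℝ) : ℂ) * Complex.I
          = (n : ℂ) * (2 * Real.pi * Complex.I) := by push_cast; ring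
      rw [this, Complex.exp_int_mul_two_pi_mul_I]
    rw [hexp, habs, mul_one]


set_option maxHeartbeats 2000000 in
/-- for all large `|n|` the characteristic equation
`e^{2λ}(1+α+(a+m)λ) + (1-α) + (a-m)λ = 0` has a root `λₙ` with `|λₙ - μₙ| ≤ C/|n|`. -/
theorem stmt6 (m a α : ℝ) (hm : 0 < m) (ha : 0 < a) (hα : 0 < α) (hma : m ≠ a) :
    ∃ (N : ℕ) (C : ℝ), 0 < C ∧
      ∀ n : ℤ, (N : ℤ) ≤ |n| →
        ∃ l : ℂ,
          Complex.exp (2 * l) * (1 + α + (a + m) * l) + (1 - α) + (a - m) * l = 0 ∧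
          ‖l - muSeq m a n‖ ≤ C / |(n : ℝ)| := by
  have ham : (0:ℝ) < a + m := by linarith
  have hamC' : ((m:ℂ) + a) ≠ 0 := by
    norm_cast; intro h; linarith [h]
  have hamC : ((a:ℂ) + m) ≠ 0 := by rw [add_comm]; exact hamC'
  have hamsC : ((a:ℂ) - m) ≠ 0 := by
    intro h
    rw [sub_eq_zero] at h
    exact hma (by exact_mod_cast h.symm)
  set K : ℝ := ((1 - α) * (m + a) - (a - m) * (1 + α)) / (a - m) with hK
  set c : ℝ := |K| with hc
  set C : ℝ := 2 * (c + 1) / (a + m) with hC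
  have hc0 : 0 ≤ c := abs_nonneg _
  have hCpos : 0 < C := by
    apply div_pos ?_ ham; linarith
  set M : ℝ := max (max (2*C) (2*(1+α)/(a+m))) (max (8*c/(a+m)) 2) with hM
  refine ⟨⌈M⌉₊, C, hCpos, fun n hn => ?_⟩
  set y : ℝ := |(n:ℝ)| with hy
  have hyM : M ≤ y := by
    have h1 : (M : ℝ) ≤ (⌈M⌉₊ : ℝ) := Nat.le_ceil M
    have h2 : ((⌈M⌉₊ : ℤ) : ℝ) ≤ ((|n| : ℤ) : ℝ) := by exact_mod_cast hn
    rw [Int.cast_abs] at h2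
    simpa [hy] using h1.trans (by exact_mod_cast h2)
  have hy2 : (2:ℝ) ≤ y := le_trans (le_trans (le_max_right _ _) (le_max_right _ _)) hyM
  have hy0 : (0:ℝ) < y := by linarith
  have hyC : 2*C ≤ y := le_trans (le_trans (le_max_left _ _) (le_max_left _ _)) hyM
  have hyα : 2*(1+α)/(a+m) ≤ y := le_trans (le_trans (le_max_right _ _) (le_max_left _ _)) hyM
  have hyc : 8*c/(a+m) ≤ y := le_trans (le_trans (le_max_left _ _) (le_max_right _ _)) hyM
  set ρ : ℝ := C / y with hρ
  have hρpos : 0 < ρ := div_pos hCpos hy0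
  have hρhalf : ρ ≤ 1/2 := by
    rw [hρ, div_le_iff₀ hy0]; linarith
  set μ : ℂ := muSeq m a n with hμ
  set D : ℂ → ℂ := fun z => 1 + (α:ℂ) + ((a:ℂ) + m) * z with hD
  set w : ℂ → ℂ := fun z => (K:ℂ) / D z with hw
  set φ : ℂ → ℂ := fun z => μ + (1/2 : ℂ) * Complex.log (1 + w z) with hφ
  set B : Set ℂ := Metric.closedBall μ ρ with hB
  -- lower bound on |λ| on B
  have hIm : ∀ z ∈ B, y ≤ ‖z‖ := by
    intro z hz
    have him : μ.im = na m a n * Real.pi := by simp [hμ, muSeq]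
    have hna : y - 1/2 ≤ |na m a n| := by
      unfold na
      split_ifs
      · rw [← hy]; linarith
      · have habs : |(n:ℝ)| ≤ |(n:ℝ) + 1/2| + 1/2 := by
          calc |(n:ℝ)| = |((n:ℝ) + 1/2) + (-(1/2))| := by norm_num
            _ ≤ |(n:ℝ) + 1/2| + |(-(1/2) : ℝ)| := abs_add_le _ _
            _ = |(n:ℝ) + 1/2| + 1/2 := by norm_num
        rw [← hy] at habs
        linarith
    have hπ : (3:ℝ) < Real.pi := Real.pi_gt_three
    have hImμ : (y - 1/2) * Real.pi ≤ |μ.im| := by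
      rw [him, abs_mul, abs_of_pos Real.pi_pos]
      apply mul_le_mul_of_nonneg_right hna (le_of_lt Real.pi_pos)
    have hdist : |z.im - μ.im| ≤ ρ := by
      have h1 : |(z - μ).im| ≤ ‖z - μ‖ := Complex.abs_im_le_norm _
      have h2 : ‖z - μ‖ ≤ ρ := by
        rw [← Complex.dist_eq]; exact Metric.mem_closedBall.1 hz
      simpa [Complex.sub_im] using h1.trans h2
    have hImz : (y - 1/2) * Real.pi - 1/2 ≤ |z.im| := by
      have := abs_sub_abs_le_abs_sub μ.im z.im
      rw [abs_sub_comm μ.im z.im] at this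
      linarith [hρhalf]
    calc y ≤ (y - 1/2) * Real.pi - 1/2 := by nlinarith
      _ ≤ |z.im| := hImz
      _ ≤ ‖z‖ := Complex.abs_im_le_norm z
  -- lower bound on |D z| on B
  have hDlb : ∀ z ∈ B, (a+m)*y/2 ≤ ‖D z‖ := by
    intro z hz
    have hsub : D z - (1 + (α:ℂ)) = ((a:ℂ)+m)*z := by
      simp only [hD]; ring
    have h1 : ‖((a:ℂ)+m)*z‖ ≤ ‖D z‖ + ‖1+(α:ℂ)‖ := by
      rw [← hsub]
      exact norm_sub_le _ _
    have h2 : ‖((a:ℂ)+m)*z‖ = (a+m) * ‖z‖ := by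
      rw [norm_mul]
      congr 1
      rw [show ((a:ℂ)+m) = ((a+m : ℝ) : ℂ) by push_cast; ring, Complex.norm_real, Real.norm_eq_abs,
        abs_of_pos ham]
    have h3 : ‖1 + (α:ℂ)‖ = 1 + α := by
      rw [show (1 + (α:ℂ)) = ((1+α : ℝ) : ℂ) by push_cast; ring, Complex.norm_real, Real.norm_eq_abs]
      exact abs_of_pos (by linarith)
    have h4 : (a+m)*y ≤ (a+m) * ‖z‖ :=
      mul_le_mul_of_nonneg_left (hIm z hz) (le_of_lt ham)
    have h5 : 2*(1+α) ≤ (a+m)*y := by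
      rw [div_le_iff₀ ham] at hyα; linarith
    rw [h2, h3] at h1
    linarith
  have hDne : ∀ z ∈ B, D z ≠ 0 := by
    intro z hz h0
    have := hDlb z hz
    rw [h0, norm_zero] at this
    nlinarith
  -- bound on |w z| on B
  have hwb : ∀ z ∈ B, ‖w z‖ ≤ C / y := by
    intro z hz
    have habs : ‖w z‖ = c / ‖D z‖ := by
      rw [hw]; simp only [norm_div, Complex.norm_real, Real.norm_eq_abs]; rw [hc]
    have hDpos : 0 < ‖D z‖ := by nlinarith [hDlb z hz]
    rw [habs, div_le_div_iff₀ hDpos hy0]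
    have h6 : C * ((a+m)*y/2) ≤ C * ‖D z‖ :=
      mul_le_mul_of_nonneg_left (hDlb z hz) hCpos.le
    have h7 : C * ((a+m)*y/2) = (c+1)*y := by
      rw [hC]; field_simp
    nlinarith
  have hChalf : C / y ≤ 1/2 := by
    rw [div_le_iff₀ hy0]; linarith
  have hne1 : ∀ z ∈ B, 1 + w z ≠ 0 := by
    intro z hz h0
    have h1 : ‖w z‖ = 1 := by
      have : w z = -1 := by linear_combination h0
      rw [this]; simp
    have := (hwb z hz).trans hChalf
    rw [h1] at this; norm_num at this
  -- φ maps B to B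
  have hmap : Set.MapsTo φ B B := by
    intro z hz
    have hlog : ‖Complex.log (1 + w z)‖ ≤ 2 * ‖w z‖ := by
      have := log_lip (w z) 0 (by
        exact (hwb z hz).trans hChalf) (by norm_num)
      simpa [Complex.log_one] using this
    rw [hB, Metric.mem_closedBall, Complex.dist_eq]
    have heq : φ z - μ = (1/2 : ℂ) * Complex.log (1 + w z) := by rw [hφ]; ring_nf
    rw [heq, norm_mul]
    have h12 : ‖(1/2 : ℂ)‖ = 1/2 := by norm_num
    rw [h12]
    calc 1/2 * ‖Complex.log (1 + w z)‖
        ≤ 1/2 * (2 * ‖w z‖) := by linarith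
      _ = ‖w z‖ := by ring
      _ ≤ C / y := hwb z hz
  -- contraction on B
  have hlip : ∀ z ∈ B, ∀ z' ∈ B, dist (φ z) (φ z') ≤ (1/2) * dist z z' := by
    intro z hz z' hz'
    have hDz := hDne z hz
    have hDz' := hDne z' hz'
    have hdiff : w z - w z' = (K:ℂ) * (((a:ℂ)+m) * (z' - z)) / (D z * D z') := by
      rw [hw]
      simp only
      rw [div_sub_div _ _ hDz hDz']
      congr 1
      simp only [hD]; ring
    have ham2 : ‖(a:ℂ)+m‖ = a + m := by
      rw [show ((a:ℂ)+m) = ((a+m : ℝ) : ℂ) by push_cast; ring, Complex.norm_real, Real.norm_eq_abs,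
        abs_of_pos ham]
    have habsdiff : ‖w z - w z'‖
        = c * ((a+m) * dist z z') / (‖D z‖ * ‖D z'‖) := by
      rw [hdiff, norm_div, norm_mul, norm_mul, norm_mul, Complex.norm_real, Real.norm_eq_abs, ham2, ← hc]
      congr 2
      rw [Complex.dist_eq, norm_sub_rev]
    have hlog := log_lip (w z) (w z')
      (by exact (hwb z hz).trans hChalf)
      (by exact (hwb z' hz').trans hChalf)
    have hstep : ‖Complex.log (1 + w z) - Complex.log (1 + w z')‖
        ≤ 2 * ‖w z - w z'‖ := by
      simpa using hlog
    have hφd : φ z - φ z' = (1/2 : ℂ) * (Complex.log (1 + w z) - Complex.log (1 + w z')) := by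
      rw [hφ]; ring_nf
    rw [Complex.dist_eq, hφd, norm_mul]
    have h12 : ‖(1/2 : ℂ)‖ = 1/2 := by norm_num
    rw [h12]
    have hDzlb := hDlb z hz
    have hDz'lb := hDlb z' hz'
    have h8c : 8*c ≤ (a+m)*y := by rw [div_le_iff₀ ham] at hyc; linarith
    have hq : (0:ℝ) < (a+m)*y/2 := by positivity
    have hd0 : (0:ℝ) ≤ dist z z' := dist_nonneg
    have hfinal : ‖w z - w z'‖ ≤ (1/2) * dist z z' := by
      rw [habsdiff]
      have hAA' : ((a+m)*y/2)*((a+m)*y/2) ≤ ‖D z‖ * ‖D z'‖ :=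
        mul_le_mul hDzlb hDz'lb hq.le (norm_nonneg _)
      have step1 : c * ((a+m) * dist z z') / (‖D z‖ * ‖D z'‖)
          ≤ c * ((a+m) * dist z z') / (((a+m)*y/2)*((a+m)*y/2)) := by
        apply div_le_div_of_nonneg_left (by positivity) (by positivity) hAA'
      have step2 : c * ((a+m) * dist z z') / (((a+m)*y/2)*((a+m)*y/2)) ≤ (1/2) * dist z z' := by
        rw [div_le_iff₀ (by positivity)]
        have h1 : 8*c*((a+m)*dist z z') ≤ (a+m)*y*((a+m)*dist z z') :=
          mul_le_mul_of_nonneg_right h8c (mul_nonneg ham.le hd0)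
        have hyy : y ≤ y*y := by nlinarith
        nlinarith [mul_le_mul_of_nonneg_left hyy (mul_nonneg (mul_nonneg ham.le ham.le) hd0)]
      linarith
    calc 1/2 * ‖Complex.log (1 + w z) - Complex.log (1 + w z')‖
        ≤ 1/2 * (2 * ‖w z - w z'‖) := by linarith
      _ = ‖w z - w z'‖ := by ring
      _ ≤ 1/2 * dist z z' := hfinal
  -- Banach fixed point
  have hsc : IsComplete B := Metric.isClosed_closedBall.isComplete
  have hhalf : (1/2 : NNReal) < 1 := by
    rw [← NNReal.coe_lt_coe]
    norm_num
  have hcontr : ContractingWith (1/2 : NNReal) (hmap.restrict φ B B) := by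
    refine ⟨hhalf, LipschitzWith.of_dist_le_mul ?_⟩
    rintro ⟨x, hx⟩ ⟨x', hx'⟩
    have hcoe : ((1/2 : NNReal) : ℝ) = 1/2 := by
      rw [NNReal.coe_div]; norm_num
    simp only [Subtype.dist_eq, Set.MapsTo.val_restrict_apply, hcoe]
    exact hlip x hx x' hx'
  have hμB : μ ∈ B := Metric.mem_closedBall_self (le_of_lt hρpos)
  obtain ⟨l, hlB, hfix, -, -⟩ :=
    hcontr.exists_fixedPoint' hsc hmap hμB (edist_ne_top _ _)
  refine ⟨l, ?_, ?_⟩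
  · -- the equation
    have hfix' : l = μ + (1/2 : ℂ) * Complex.log (1 + w l) := by
      conv_lhs => rw [← hfix]
    have h2l : (2:ℂ) * l = 2 * μ + Complex.log (1 + w l) := by
      conv_lhs => rw [hfix']
      ring
    have hexp : Complex.exp (2 * l) = (((m - a) / (m + a) : ℝ) : ℂ) * (1 + w l) := by
      rw [h2l, Complex.exp_add, hμ, exp_two_mu m a hm ha hma n,
        Complex.exp_log (hne1 l hlB)]
    have hDl : (1 + (α:ℂ) + ((a:ℂ)+m) * l) ≠ 0 := hDne l hlB
    have hwl : w l = (K:ℂ) / (1 + (α:ℂ) + ((a:ℂ)+m) * l) := by rw [hw]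
    rw [hexp, hwl, hK]
    push_cast
    field_simp
    ring
  · have : dist l μ ≤ ρ := Metric.mem_closedBall.1 hlB
    rw [Complex.dist_eq] at this
    simpa [hρ, hy, hμ] using this
end

section
/- Let m, a, α > 0 be real constants with m ≠ a. Set r = |m−a|/(m+a), n_a = n if m > a and n_a = n + 1/2 if 0 < m < a, and μₙ = (1/2)·ln r + n_a π i. Suppose (λₙ)_{n ∈ ℤ} is a sequence of nonzero complex numbers and C₀ > 0 is such that |λₙ − μₙ| ≤ C₀/|n| for all n ≠ 0. Define fₙ(x) = e^{λₙ x} − e^{−λₙ x}. Then there exist C > 0 and N ∈ ℕ such that for all integers n with |n| ≥ N and all x ∈ [0,1]: |fₙ'(x)/λₙ − (r^{x/2} e^{i n_a π x} + r^{−x/2} e^{−i n_a π x})| ≤ C/|n|, |fₙ(x) − (r^{x/2} e^{i n_a π x} − r^{−x/2} e^{−i n_a π x})| ≤ C/|n|, and |(fₙ'(1) + α λₙ fₙ(1))/λₙ²| ≤ C/|n|. -/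
/-- The eigenfunction `f_λ(x) = e^{λx} - e^{-λx}`. -/
noncomputable def efun (l : ℂ) : ℝ → ℂ :=
  fun x => Complex.exp (l * x) - Complex.exp (-(l * x))

lemma efun_hasDerivAt (l : ℂ) (x : ℝ) :
    HasDerivAt (efun l) (l * Complex.exp (l * x) + l * Complex.exp (-(l * x))) x := by
  have h1 : HasDerivAt (fun z : ℂ => Complex.exp (l * z)) (Complex.exp (l * x) * l) (x : ℂ) := by
    simpa using ((hasDerivAt_id (x : ℂ)).const_mul l).cexp
  have h2 : HasDerivAt (fun z : ℂ => Complex.exp (-(l * z)))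
      (Complex.exp (-(l * x)) * (-l)) (x : ℂ) := by
    simpa using (((hasDerivAt_id (x : ℂ)).const_mul l).neg).cexp
  have h := (h1.sub h2).comp_ofReal
  convert h using 1
  · rfl
  ring

lemma exp_sub_exp_le (z w : ℂ) (h : ‖z - w‖ ≤ 1) :
    ‖Complex.exp z - Complex.exp w‖
      ≤ 2 * Real.exp w.re * ‖z - w‖ := by
  have h1 : Complex.exp z - Complex.exp w = Complex.exp w * (Complex.exp (z - w) - 1) := by
    rw [mul_sub, mul_one, ← Complex.exp_add]
    ring_nf
  rw [h1, norm_mul, Complex.norm_exp]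
  have h2 := Complex.norm_exp_sub_one_le h
  calc Real.exp w.re * ‖Complex.exp (z - w) - 1‖
      ≤ Real.exp w.re * (2 * ‖z - w‖) :=
        mul_le_mul_of_nonneg_left h2 (Real.exp_pos _).le
    _ = 2 * Real.exp w.re * ‖z - w‖ := by ring

lemma exp_mu (m a : ℝ) (hr : 0 < |m - a| / (m + a)) (n : ℤ) (x : ℝ) :
    ((((|m - a| / (m + a)) ^ (x / 2) : ℝ)) : ℂ)
        * Complex.exp (Complex.I * (na m a n * Real.pi * x))
      = Complex.exp (muSeq m a n * x) := by
  rw [Real.rpow_def_of_pos hr, Complex.ofReal_exp, ← Complex.exp_add]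
  congr 1
  simp only [muSeq]
  push_cast
  ring

lemma exp_neg_mu (m a : ℝ) (hr : 0 < |m - a| / (m + a)) (n : ℤ) (x : ℝ) :
    ((((|m - a| / (m + a)) ^ (-(x / 2)) : ℝ)) : ℂ)
        * Complex.exp (-(Complex.I * (na m a n * Real.pi * x)))
      = Complex.exp (-(muSeq m a n * x)) := by
  rw [Real.rpow_def_of_pos hr, Complex.ofReal_exp, ← Complex.exp_add]
  congr 1
  simp only [muSeq]
  push_cast
  ring

set_option maxHeartbeats 1600000 in
/-- asymptotics of the eigenfunctions `fₙ(x) = e^{λₙx} - e^{-λₙx}`,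
their derivatives, and the boundary combination `(fₙ'(1)+αλₙfₙ(1))/λₙ²`,
uniformly for `x ∈ [0,1]`. -/
theorem stmt7 (m a α : ℝ) (hm : 0 < m) (ha : 0 < a) (hα : 0 < α) (hma : m ≠ a)
    (l : ℤ → ℂ) (hl : ∀ n, l n ≠ 0) (C₀ : ℝ) (hC₀ : 0 < C₀)
    (hasymp : ∀ n : ℤ, n ≠ 0 → ‖l n - muSeq m a n‖ ≤ C₀ / |(n : ℝ)|) :
    ∃ (C : ℝ), 0 < C ∧ ∃ N : ℕ, ∀ n : ℤ, (N : ℤ) ≤ |n| → ∀ x ∈ Set.Icc (0:ℝ) 1,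
      ‖(deriv (efun (l n)) x / l n
          - (((|m - a| / (m + a)) ^ (x / 2) : ℝ)
              * Complex.exp (Complex.I * (na m a n * Real.pi * x))
            + ((|m - a| / (m + a)) ^ (-(x / 2)) : ℝ)
              * Complex.exp (-(Complex.I * (na m a n * Real.pi * x)))))‖ ≤ C / |(n : ℝ)| ∧
      ‖(efun (l n) x
          - (((|m - a| / (m + a)) ^ (x / 2) : ℝ)
              * Complex.exp (Complex.I * (na m a n * Real.pi * x))
            - ((|m - a| / (m + a)) ^ (-(x / 2)) : ℝ)
              * Complex.exp (-(Complex.I * (na m a n * Real.pi * x)))))‖ ≤ C / |(n : ℝ)| ∧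
      ‖((deriv (efun (l n)) 1 + α * l n * efun (l n) 1) / (l n) ^ 2)‖
        ≤ C / |(n : ℝ)| := by
  have hr : 0 < |m - a| / (m + a) := by
    apply div_pos (abs_pos.mpr (sub_ne_zero.mpr hma)) (by linarith)
  set L : ℝ := Real.log (|m - a| / (m + a)) with hL
  set K : ℝ := Real.exp (|L| / 2 + C₀) with hKdef
  have hK : 0 < K := Real.exp_pos _
  have hKbig : Real.exp (|L| / 2) ≤ K := by
    apply Real.exp_le_exp.mpr; linarith
  refine ⟨4 * K * C₀ + (2 + 2 * α) * K + 1, by positivity, ⌈C₀⌉₊ + 2, ?_⟩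
  intro n hn x hx
  obtain ⟨hx0, hx1⟩ := hx
  -- basic size facts about n
  have hnR : (⌈C₀⌉₊ + 2 : ℝ) ≤ |(n : ℝ)| := by
    have : ((⌈C₀⌉₊ + 2 : ℕ) : ℝ) ≤ ((|n| : ℤ) : ℝ) := by exact_mod_cast hn
    rw [Int.cast_abs] at this
    push_cast at this ⊢
    linarith
  have hC₀n : C₀ + 2 ≤ |(n : ℝ)| := le_trans (by linarith [Nat.le_ceil C₀]) hnR
  have hn1 : (1 : ℝ) ≤ |(n : ℝ)| := by linarith
  have hnpos : (0 : ℝ) < |(n : ℝ)| := by linarith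
  have hnne : n ≠ 0 := by
    intro h; rw [h] at hnpos; simp at hnpos
  set μ : ℂ := muSeq m a n with hμ
  set d : ℂ := l n - μ with hd
  have habsd : ‖d‖ ≤ C₀ / |(n : ℝ)| := hasymp n hnne
  clear_value L K μ d
  have hdiv1 : C₀ / |(n : ℝ)| ≤ 1 := by
    rw [div_le_one hnpos]; linarith
  have hdivC : C₀ / |(n : ℝ)| ≤ C₀ := by
    rw [div_le_iff₀ hnpos]; nlinarith
  -- real and imaginary parts of μ
  have hμre : μ.re = L / 2 := by simp [hμ, muSeq, hL]
  have hμim : μ.im = na m a n * Real.pi := by simp [hμ, muSeq]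
  -- the model exponentials
  have e1 : ((((|m - a| / (m + a)) ^ (x / 2) : ℝ)) : ℂ)
      * Complex.exp (Complex.I * (na m a n * Real.pi * x)) = Complex.exp (μ * x) := by
    rw [hμ]; exact exp_mu m a hr n x
  have e2 : ((((|m - a| / (m + a)) ^ (-(x / 2)) : ℝ)) : ℂ)
      * Complex.exp (-(Complex.I * (na m a n * Real.pi * x))) = Complex.exp (-(μ * x)) := by
    rw [hμ]; exact exp_neg_mu m a hr n x
  -- bound on exp(λx) - exp(μx)
  have hdx : ‖l n * x - μ * x‖ ≤ C₀ / |(n : ℝ)| := by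
    have : l n * (x : ℂ) - μ * x = d * x := by rw [hd]; ring
    rw [this, norm_mul, Complex.norm_real, Real.norm_eq_abs, abs_of_nonneg hx0]
    calc ‖d‖ * x ≤ ‖d‖ * 1 :=
          mul_le_mul_of_nonneg_left hx1 (norm_nonneg _)
      _ = ‖d‖ := mul_one _
      _ ≤ C₀ / |(n : ℝ)| := habsd
  have hμxre : (μ * (x : ℂ)).re = L / 2 * x := by
    rw [Complex.mul_re, Complex.ofReal_re, Complex.ofReal_im, hμre]
    ring
  have hLx : L / 2 * x ≤ |L| / 2 := by
    nlinarith [le_abs_self L, abs_nonneg L]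
  have hLx' : -(L / 2 * x) ≤ |L| / 2 := by
    nlinarith [neg_abs_le L, abs_nonneg L]
  have hE1 : ‖Complex.exp (l n * x) - Complex.exp (μ * x)‖
      ≤ 2 * K * (C₀ / |(n : ℝ)|) := by
    calc ‖Complex.exp (l n * x) - Complex.exp (μ * x)‖
        ≤ 2 * Real.exp ((μ * (x : ℂ)).re) * ‖l n * x - μ * x‖ :=
          exp_sub_exp_le _ _ (le_trans hdx hdiv1)
      _ ≤ 2 * K * (C₀ / |(n : ℝ)|) := by
          apply mul_le_mul _ hdx (norm_nonneg _) (by positivity)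
          have : Real.exp ((μ * (x : ℂ)).re) ≤ K := by
            rw [hμxre]
            exact le_trans (Real.exp_le_exp.mpr hLx) hKbig
          linarith
  have hE2 : ‖Complex.exp (-(l n * x)) - Complex.exp (-(μ * x))‖
      ≤ 2 * K * (C₀ / |(n : ℝ)|) := by
    calc ‖Complex.exp (-(l n * x)) - Complex.exp (-(μ * x))‖
        ≤ 2 * Real.exp ((-(μ * (x : ℂ))).re) * ‖-(l n * x) - -(μ * x)‖ := by
          apply exp_sub_exp_le
          have : -(l n * (x : ℂ)) - -(μ * x) = -(l n * x - μ * x) := by ring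
          rw [this, norm_neg]
          exact le_trans hdx hdiv1
      _ ≤ 2 * K * (C₀ / |(n : ℝ)|) := by
          have heq : -(l n * (x : ℂ)) - -(μ * x) = -(l n * x - μ * x) := by ring
          rw [heq, norm_neg]
          apply mul_le_mul _ hdx (norm_nonneg _) (by positivity)
          have : Real.exp ((-(μ * (x : ℂ))).re) ≤ K := by
            rw [Complex.neg_re, hμxre]
            exact le_trans (Real.exp_le_exp.mpr hLx') hKbig
          linarith
  have tri : ∀ u v : ℂ, ‖u - v‖ ≤ ‖u‖ + ‖v‖ := by
    intro u v
    simpa [sub_eq_add_neg] using norm_add_le u (-v)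
  -- derivative formula
  have hderiv : ∀ y : ℝ, deriv (efun (l n)) y
      = l n * Complex.exp (l n * y) + l n * Complex.exp (-(l n * y)) :=
    fun y => (efun_hasDerivAt (l n) y).deriv
  have hbound : 4 * K * C₀ / |(n : ℝ)| ≤ (4 * K * C₀ + (2 + 2 * α) * K + 1) / |(n : ℝ)| := by
    gcongr
    nlinarith [hK, hα]
  refine ⟨?_, ?_, ?_⟩
  · -- statement 1
    rw [e1, e2, hderiv x]
    have hq : (l n * Complex.exp (l n * x) + l n * Complex.exp (-(l n * x))) / l n
        = Complex.exp (l n * x) + Complex.exp (-(l n * x)) := by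
      rw [← mul_add, mul_div_cancel_left₀ _ (hl n)]
    rw [hq]
    have heq : Complex.exp (l n * x) + Complex.exp (-(l n * x))
        - (Complex.exp (μ * x) + Complex.exp (-(μ * x)))
        = (Complex.exp (l n * x) - Complex.exp (μ * x))
          + (Complex.exp (-(l n * x)) - Complex.exp (-(μ * x))) := by ring
    rw [heq]
    calc ‖_‖ ≤ _ + _ := norm_add_le _ _
      _ ≤ 2 * K * (C₀ / |(n : ℝ)|) + 2 * K * (C₀ / |(n : ℝ)|) := add_le_add hE1 hE2
      _ = 4 * K * C₀ / |(n : ℝ)| := by ring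
      _ ≤ (4 * K * C₀ + (2 + 2 * α) * K + 1) / |(n : ℝ)| := hbound
  · -- statement 2
    rw [e1, e2]
    have heq : efun (l n) x - (Complex.exp (μ * x) - Complex.exp (-(μ * x)))
        = (Complex.exp (l n * x) - Complex.exp (μ * x))
          - (Complex.exp (-(l n * x)) - Complex.exp (-(μ * x))) := by
      simp only [efun]; ring
    rw [heq]
    calc ‖_‖ ≤ _ + _ := tri _ _
      _ ≤ 2 * K * (C₀ / |(n : ℝ)|) + 2 * K * (C₀ / |(n : ℝ)|) := add_le_add hE1 hE2
      _ = 4 * K * C₀ / |(n : ℝ)| := by ring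
      _ ≤ (4 * K * C₀ + (2 + 2 * α) * K + 1) / |(n : ℝ)| := hbound
  · -- statement 3
    -- |λ| ≥ |n|
    have hdim : |d.im| ≤ C₀ := le_trans (le_trans (Complex.abs_im_le_norm d) habsd) hdivC
    have hna : |(n : ℝ)| - 1 / 2 ≤ |na m a n| := by
      unfold na
      split
      · linarith [abs_nonneg ((n : ℝ))]
      · have h := abs_add_le ((n : ℝ) + 1 / 2) (-(1 / 2))
        rw [abs_neg] at h
        have h2 : |(1 : ℝ) / 2| = 1 / 2 := by norm_num
        rw [h2] at h
        have h3 : (n : ℝ) + 1 / 2 + -(1 / 2) = (n : ℝ) := by ring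
        rw [h3] at h
        linarith
    have hμimabs : (|(n : ℝ)| - 1 / 2) * Real.pi ≤ |μ.im| := by
      rw [hμim, abs_mul, abs_of_nonneg Real.pi_pos.le]
      exact mul_le_mul_of_nonneg_right hna Real.pi_pos.le
    have hlim : (|(n : ℝ)| - 1 / 2) * Real.pi - C₀ ≤ |(l n).im| := by
      have hsum : (l n).im = μ.im + d.im := by rw [hd]; simp [Complex.sub_im]
      have h4 : |μ.im| ≤ |(l n).im| + |d.im| := by
        calc |μ.im| = |(l n).im - d.im| := by rw [hsum]; ring_nf
          _ ≤ |(l n).im| + |d.im| := abs_sub _ _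
      linarith
    have habs_l : |(n : ℝ)| ≤ ‖l n‖ := by
      have h5 : |(l n).im| ≤ ‖l n‖ := Complex.abs_im_le_norm _
      have h6 : 0 ≤ (|(n : ℝ)| - 1 / 2) * (Real.pi - 3) :=
        mul_nonneg (by linarith) (by linarith [Real.pi_gt_three])
      linarith [h5, h6, hlim, hC₀n, hC₀]
    -- value computation
    have hval : deriv (efun (l n)) 1 + α * l n * efun (l n) 1
        = l n * ((((1 + α : ℝ)) : ℂ) * Complex.exp (l n)
            + (((1 - α : ℝ)) : ℂ) * Complex.exp (-(l n))) := by
      rw [hderiv 1]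
      simp only [efun, Complex.ofReal_one, mul_one]
      push_cast
      ring
    rw [hval, pow_two, mul_div_mul_left _ _ (hl n), norm_div]
    -- bound the numerator
    have hreμ : |μ.re| ≤ |L| / 2 := by rw [hμre, abs_div]; simp
    have hred : |d.re| ≤ C₀ := le_trans (le_trans (Complex.abs_re_le_norm d) habsd) hdivC
    have hre_l : |(l n).re| ≤ |L| / 2 + C₀ := by
      have hsum : (l n).re = μ.re + d.re := by rw [hd]; simp [Complex.sub_re]
      rw [hsum]
      calc |μ.re + d.re| ≤ |μ.re| + |d.re| := abs_add_le _ _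
        _ ≤ |L| / 2 + C₀ := add_le_add hreμ hred
    have hexp1 : Real.exp (l n).re ≤ K := by
      rw [hKdef]
      exact Real.exp_le_exp.mpr (le_trans (le_abs_self _) hre_l)
    have hexp2 : Real.exp (-(l n).re) ≤ K := by
      rw [hKdef]
      exact Real.exp_le_exp.mpr (le_trans (neg_le_abs _) hre_l)
    have hnum : ‖(((1 + α : ℝ)) : ℂ) * Complex.exp (l n)
        + (((1 - α : ℝ)) : ℂ) * Complex.exp (-(l n))‖ ≤ (2 + 2 * α) * K := by
      calc ‖_‖ ≤ _ + _ := norm_add_le _ _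
        _ = |1 + α| * Real.exp (l n).re + |1 - α| * Real.exp (-(l n).re) := by
            rw [norm_mul, norm_mul, Complex.norm_real, Complex.norm_real, Real.norm_eq_abs, Real.norm_eq_abs,
              Complex.norm_exp, Complex.norm_exp, Complex.neg_re]
        _ ≤ (1 + α) * K + (1 + α) * K := by
            have h1a : |1 + α| = 1 + α := abs_of_pos (by linarith)
            have h2a : |1 - α| ≤ 1 + α := abs_le.mpr ⟨by linarith, by linarith⟩
            rw [h1a]
            exact add_le_add (mul_le_mul_of_nonneg_left hexp1 (by linarith))
              (mul_le_mul h2a hexp2 (Real.exp_pos _).le (by linarith))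
        _ = (2 + 2 * α) * K := by ring
    calc ‖_‖ / ‖l n‖ ≤ ((2 + 2 * α) * K) / |(n : ℝ)| :=
          div_le_div₀ (by positivity) hnum hnpos habs_l
      _ ≤ (4 * K * C₀ + (2 + 2 * α) * K + 1) / |(n : ℝ)| := by
          gcongr
          nlinarith [mul_pos hK hC₀]
end
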